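/- Let p, q ∈ K[x] be monic polynomials whose degrees are relatively prime, and let a ∈ K[x] be a polynomial of degree at least two that divides both p and q. Then every root of a is a root of the characteristic polynomial χ_{p,q}; that is, for every α ∈ K with a(α) = 0 one has χ_{p,q}(α) = 0. -/

import Mathlib

open Polynomial

/-- The resultant of two polynomials, defined as the determinant of their Sylvester matrix
(with coefficients listed in ascending order of degree). -/
noncomputable def resultant {R : Type*} [CommRing R] (f g : Polynomial R) : R :=
  Matrix.det (Matrix.of fun (i j : Fin (g.natDegree + f.natDegree)) =>
    if (i : ℕ) < g.natDegree then
      (if (i : ℕ) ≤ (j : ℕ) then f.coeff ((j : ℕ) - (i : ℕ)) else 0)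
    else
      (if (i : ℕ) - g.natDegree ≤ (j : ℕ) then g.coeff ((j : ℕ) - ((i : ℕ) - g.natDegree))
       else 0))

/-- For `p ∈ K[x]`, the polynomial `P(x,y) = (p(x) − p(y))/(x − y)`, viewed as a polynomial
in `y` with coefficients in `K[x]` (the outer variable is `y`). -/
noncomputable def divDiff {K : Type*} [Field K] (p : Polynomial K) :
    Polynomial (Polynomial K) :=
  (p.map (Polynomial.C : K →+* Polynomial K) - Polynomial.C p) /ₘ
    (Polynomial.X - Polynomial.C Polynomial.X)

/-- The characteristic polynomial `χ_{p,q} = Res_y(P(x,y), Q(x,y))` of the pair `p, q`. -/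
noncomputable def charPoly {K : Type*} [Field K] (p q : Polynomial K) : Polynomial K :=
  _root_.resultant (divDiff p) (divDiff q)

section Aux

variable {K : Type*} [Field K]

lemma aux_row_sum {R : Type*} [CommRing R] (f : Polynomial R) (β : R) (N i : ℕ)
    (h : f.natDegree + i < N) :
    ∑ j : Fin N, (if i ≤ (j : ℕ) then f.coeff ((j : ℕ) - i) else 0) * β ^ (j : ℕ)
      = β ^ i * f.eval β := by
  rw [Fin.sum_univ_eq_sum_range (fun j => (if i ≤ j then f.coeff (j - i) else 0) * β ^ j)]
  have h1 : ∑ j ∈ Finset.range N, (if i ≤ j then f.coeff (j - i) else 0) * β ^ j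
      = ∑ j ∈ Finset.Ico i N, f.coeff (j - i) * β ^ j := by
    rw [← Finset.sum_subset (s₁ := Finset.Ico i N) (s₂ := Finset.range N)]
    · apply Finset.sum_congr rfl
      intro j hj
      rw [Finset.mem_Ico] at hj
      rw [if_pos hj.1]
    · intro j hj
      rw [Finset.mem_Ico] at hj; rw [Finset.mem_range]; omega
    · intro j hj hj2
      rw [Finset.mem_range] at hj; rw [Finset.mem_Ico] at hj2
      rw [if_neg (by omega)]
      ring
  rw [h1, Finset.sum_Ico_eq_sum_range]
  have h2 : f.eval β = ∑ k ∈ Finset.range (N - i), f.coeff k * β ^ k :=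
    eval_eq_sum_range' (by omega) β
  rw [h2, Finset.mul_sum]
  apply Finset.sum_congr rfl
  intro k _
  rw [Nat.add_sub_cancel_left, pow_add]
  ring

lemma aux_resultant_eq_zero (f g : Polynomial K) (β : K)
    (hf : f.eval β = 0) (hg : g.eval β = 0) (hpos : 0 < g.natDegree + f.natDegree) :
    _root_.resultant f g = 0 := by
  rw [_root_.resultant, ← Matrix.exists_mulVec_eq_zero_iff]
  refine ⟨fun j => β ^ (j : ℕ), ?_, ?_⟩
  · intro hv
    have : (fun (j : Fin (g.natDegree + f.natDegree)) => β ^ (j : ℕ)) ⟨0, hpos⟩ = 0 := by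
      rw [hv]; rfl
    simp at this
  · funext i
    simp only [Matrix.mulVec, Matrix.of_apply, Pi.zero_apply, dotProduct]
    by_cases hi : (i : ℕ) < g.natDegree
    · simp only [if_pos hi]
      rw [aux_row_sum f β _ i (by omega), hf, mul_zero]
    · simp only [if_neg hi]
      rw [aux_row_sum g β _ ((i : ℕ) - g.natDegree) (by omega), hg, mul_zero]

noncomputable def resAux {R : Type*} [CommRing R] (dg df : ℕ) (F G : ℕ → R) : R :=
  Matrix.det (Matrix.of fun (i j : Fin (dg + df)) =>
    if (i : ℕ) < dg then
      (if (i : ℕ) ≤ (j : ℕ) then F ((j : ℕ) - (i : ℕ)) else 0)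
    else
      (if (i : ℕ) - dg ≤ (j : ℕ) then G ((j : ℕ) - ((i : ℕ) - dg)) else 0))

lemma resultant_eq_resAux {R : Type*} [CommRing R] (f g : Polynomial R) :
    _root_.resultant f g = resAux g.natDegree f.natDegree f.coeff g.coeff := rfl

lemma map_resAux {R S : Type*} [CommRing R] [CommRing S] (φ : R →+* S)
    (dg df : ℕ) (F G : ℕ → R) :
    φ (resAux dg df F G) = resAux dg df (φ ∘ F) (φ ∘ G) := by
  rw [resAux, resAux, RingHom.map_det]
  congr 1
  ext i j
  simp only [RingHom.mapMatrix_apply, Matrix.map_apply, Matrix.of_apply, apply_ite φ,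
    map_zero, Function.comp_apply]

lemma aux_map_resultant (φ : Polynomial K →+* K) (f g : Polynomial (Polynomial K))
    (hf : f.Monic) (hg : g.Monic) :
    φ (_root_.resultant f g) = _root_.resultant (f.map φ) (g.map φ) := by
  have h1 : (f.map φ).natDegree = f.natDegree := hf.natDegree_map φ
  have h2 : (g.map φ).natDegree = g.natDegree := hg.natDegree_map φ
  rw [resultant_eq_resAux, resultant_eq_resAux, h1, h2, map_resAux]
  congr 1 <;> funext k <;> simp [coeff_map]

lemma aux_divDiff_spec (p : Polynomial K) :
    (Polynomial.X - Polynomial.C (Polynomial.X : Polynomial K)) * divDiff p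
      = p.map (Polynomial.C : K →+* Polynomial K) - Polynomial.C p := by
  have hdvd : (Polynomial.X - Polynomial.C (Polynomial.X : Polynomial K)) ∣
      (p.map (Polynomial.C : K →+* Polynomial K) - Polynomial.C p) := by
    rw [dvd_iff_isRoot]
    simp [IsRoot, eval_map, eval₂_C_X]
  have hm : (Polynomial.X - Polynomial.C (Polynomial.X : Polynomial K)).Monic :=
    monic_X_sub_C _
  have := Polynomial.modByMonic_add_div
    (p.map (Polynomial.C : K →+* Polynomial K) - Polynomial.C p) (Polynomial.X - Polynomial.C (Polynomial.X : Polynomial K))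
  rw [(Polynomial.modByMonic_eq_zero_iff_dvd hm).mpr hdvd, zero_add] at this
  exact this

lemma aux_divDiff_monic {p : Polynomial K} (hp : p.Monic) (h1 : 1 ≤ p.natDegree) :
    (divDiff p).Monic ∧ (divDiff p).natDegree = p.natDegree - 1 := by
  have h2 : (p.map (Polynomial.C : K →+* Polynomial K)).Monic := hp.map _
  have hnd : (p.map (Polynomial.C : K →+* Polynomial K)).natDegree = p.natDegree :=
    hp.natDegree_map _
  have hf : (p.map (Polynomial.C : K →+* Polynomial K) - Polynomial.C p).Monic := by
    have h3 : (-Polynomial.C p).degree < (p.map (Polynomial.C : K →+* Polynomial K)).degree := by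
      apply lt_of_le_of_lt (degree_neg (Polynomial.C p) ▸ degree_C_le)
      rw [← natDegree_pos_iff_degree_pos, hnd]
      omega
    have := h2.add_of_left h3
    rwa [← sub_eq_add_neg] at this
  have hndf : (p.map (Polynomial.C : K →+* Polynomial K) - Polynomial.C p).natDegree
      = p.natDegree := by
    rw [natDegree_sub_eq_left_of_natDegree_lt, hnd]
    rw [hnd]
    have := natDegree_C p
    omega
  have heq := aux_divDiff_spec p
  have hm : (Polynomial.X - Polynomial.C (Polynomial.X : Polynomial K)).Monic :=
    monic_X_sub_C _
  have hmon : (divDiff p).Monic := by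
    have := congrArg leadingCoeff heq
    rw [leadingCoeff_mul, hm.leadingCoeff, one_mul, hf.leadingCoeff] at this
    exact this
  refine ⟨hmon, ?_⟩
  have hne : divDiff p ≠ 0 := hmon.ne_zero
  have := congrArg natDegree heq
  rw [natDegree_mul hm.ne_zero hne, hndf, natDegree_X_sub_C] at this
  omega

/-- Specialization of the divided difference at a root `α` of `p`:
`(X - C α) * (divDiff p).map (evalRingHom α) = p`. -/
lemma aux_divDiff_map (p : Polynomial K) (α : K) (hpα : p.eval α = 0) :
    (Polynomial.X - Polynomial.C α) * (divDiff p).map (evalRingHom α) = p := by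
  have heq := congrArg (Polynomial.map (evalRingHom α)) (aux_divDiff_spec p)
  rw [Polynomial.map_mul, Polynomial.map_sub, map_X, map_C, Polynomial.map_sub,
    Polynomial.map_map, map_C] at heq
  have hcomp : (evalRingHom α).comp (Polynomial.C : K →+* Polynomial K) = RingHom.id K := by
    ext c
    simp
  rw [hcomp, Polynomial.map_id] at heq
  simpa [hpα] using heq

end Aux

theorem roots_of_common_divisor_are_roots_of_charPoly
    {K : Type*} [Field K] [IsAlgClosed K] [CharZero K]
    (p q a : Polynomial K) (hp : p.Monic) (hq : q.Monic)
    (hcop : Nat.Coprime p.natDegree q.natDegree)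
    (ha : 2 ≤ a.natDegree) (hap : a ∣ p) (haq : a ∣ q) :
    ∀ α : K, a.eval α = 0 → (charPoly p q).eval α = 0 := by
  intro α hα
  -- degrees of p and q are at least 2
  have hdp2 : 2 ≤ p.natDegree :=
    le_trans ha (natDegree_le_of_dvd hap hp.ne_zero)
  have hdq2 : 2 ≤ q.natDegree :=
    le_trans ha (natDegree_le_of_dvd haq hq.ne_zero)
  -- roots of a are roots of p and q
  have hpα : p.eval α = 0 := by
    obtain ⟨c, rfl⟩ := hap
    simp [hα]
  have hqα : q.eval α = 0 := by
    obtain ⟨c, rfl⟩ := haq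
    simp [hα]
  -- divided differences are monic
  obtain ⟨hPmon, hPdeg⟩ := aux_divDiff_monic hp (by omega)
  obtain ⟨hQmon, hQdeg⟩ := aux_divDiff_monic hq (by omega)
  -- the specialized polynomials
  set Pα := (divDiff p).map (evalRingHom α) with hPα'
  set Qα := (divDiff q).map (evalRingHom α) with hQα'
  have hPs : (Polynomial.X - Polynomial.C α) * Pα = p := aux_divDiff_map p α hpα
  have hQs : (Polynomial.X - Polynomial.C α) * Qα = q := aux_divDiff_map q α hqα
  -- find a common root β of Pα and Qα
  have haz : a ≠ 0 := fun h => by simp [h] at ha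
  obtain ⟨b, hb⟩ : (Polynomial.X - Polynomial.C α) ∣ a := (dvd_iff_isRoot).mpr hα
  have hbz : b ≠ 0 := fun h => haz (by simp [hb, h])
  have hbdeg : 1 ≤ b.natDegree := by
    have := congrArg natDegree hb
    rw [natDegree_mul (X_sub_C_ne_zero α) hbz, natDegree_X_sub_C] at this
    omega
  obtain ⟨β, hβ⟩ : ∃ β, b.IsRoot β := by
    apply IsAlgClosed.exists_root
    have hpos : 0 < b.degree := natDegree_pos_iff_degree_pos.mp (by omega)
    exact fun h => hpos.ne' h
  have hfac : ∀ r : Polynomial K, a ∣ r → ∀ Rα : Polynomial K,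
      (Polynomial.X - Polynomial.C α) * Rα = r → Rα.eval β = 0 := by
    intro r har Rα hRs
    obtain ⟨c, hc⟩ := har
    rw [hb, mul_assoc] at hc
    rw [hc] at hRs
    have := mul_left_cancel₀ (X_sub_C_ne_zero α) hRs
    rw [this]
    simp [hβ.eq_zero]
  have hPβ : Pα.eval β = 0 := hfac p hap Pα hPs
  have hQβ : Qα.eval β = 0 := hfac q haq Qα hQs
  -- put everything together
  have hkey : (charPoly p q).eval α = _root_.resultant Pα Qα := by
    rw [charPoly]
    have := aux_map_resultant (evalRingHom α) (divDiff p) (divDiff q) hPmon hQmon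
    simpa using this
  rw [hkey]
  apply aux_resultant_eq_zero Pα Qα β hPβ hQβ
  have : Pα.natDegree = (divDiff p).natDegree := hPmon.natDegree_map _
  have : Qα.natDegree = (divDiff q).natDegree := hQmon.natDegree_map _
  omega
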